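/- Let Λ = diag(λ₁,…,λ_M) with λ₁ ≥ … ≥ λ_M > 0 and ρ > 0. Among all V ∈ ℂ^{M×L} with VᴴV = I_L, a maximizer of tr((Vᴴ(Λ + ρ⁻¹I_M)V)⁻¹ Vᴴ Λ² V) is V = the first L columns of the M×M identity matrix, and the maximal value equals Σ_{l=1}^{L} λ_l²/(λ_l + 1/ρ). -/

import Mathlib

open Matrix
open scoped ComplexOrder

lemma filter_lt_eq_map (M L : ℕ) (hLM : L ≤ M) :
    Finset.univ.filter (fun i : Fin M => (i : ℕ) < L)
      = Finset.univ.map (Fin.castLEEmb hLM) := by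
  ext i
  simp only [Finset.mem_filter, Finset.mem_univ, true_and, Finset.mem_map,
    Fin.castLEEmb_apply]
  constructor
  · intro h; exact ⟨⟨i, h⟩, Fin.ext rfl⟩
  · rintro ⟨j, rfl⟩; exact j.isLt

lemma key (M L : ℕ) (hLM : L ≤ M) (μ d : Fin M → ℝ)
    (hμ0 : ∀ i, 0 ≤ μ i) (hμ : ∀ i j : Fin M, i ≤ j → μ j ≤ μ i)
    (hd0 : ∀ i, 0 ≤ d i) (hd1 : ∀ i, d i ≤ 1) (hsum : ∑ i, d i = (L : ℝ)) :
    ∑ i, μ i * d i ≤ ∑ i ∈ Finset.univ.filter (fun i : Fin M => (i : ℕ) < L), μ i := by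
  rcases eq_or_lt_of_le hLM with heq | hL
  · have hf : Finset.univ.filter (fun i : Fin M => (i : ℕ) < L) = Finset.univ := by
      apply Finset.filter_true_of_mem; intro i _; exact heq ▸ i.isLt
    rw [hf]
    refine Finset.sum_le_sum fun i _ => ?_
    nlinarith [hμ0 i, hd0 i, hd1 i]
  · set t := μ ⟨L, hL⟩ with ht
    set F := Finset.univ.filter (fun i : Fin M => (i : ℕ) < L) with hF
    have hcard : F.card = L := by rw [hF, filter_lt_eq_map M L hLM]; simp
    have e1 : ∑ i, μ i * d i = (∑ i, (μ i - t) * d i) + t * L := by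
      rw [← hsum, Finset.mul_sum, ← Finset.sum_add_distrib]
      congr 1; ext i; ring
    have e2 : ∑ i ∈ F, μ i = (∑ i ∈ F, (μ i - t)) + t * L := by
      rw [Finset.sum_sub_distrib, Finset.sum_const, hcard]
      ring
    have e3 : ∑ i, (μ i - t) * d i ≤ ∑ i ∈ F, (μ i - t) := by
      rw [← Finset.sum_filter_add_sum_filter_not Finset.univ
        (fun i : Fin M => (i : ℕ) < L) (fun i => (μ i - t) * d i), ← hF]
      have h1 : ∑ i ∈ F, (μ i - t) * d i ≤ ∑ i ∈ F, (μ i - t) := by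
        refine Finset.sum_le_sum fun i hi => ?_
        rw [hF, Finset.mem_filter] at hi
        have hit : t ≤ μ i := hμ i ⟨L, hL⟩ (by exact_mod_cast hi.2.le)
        calc (μ i - t) * d i ≤ (μ i - t) * 1 :=
              mul_le_mul_of_nonneg_left (hd1 i) (by linarith)
          _ = μ i - t := mul_one _
      have h2 : ∑ i ∈ Finset.univ.filter (fun i : Fin M => ¬ (i : ℕ) < L),
          (μ i - t) * d i ≤ 0 := by
        refine Finset.sum_nonpos fun i hi => ?_
        rw [Finset.mem_filter] at hi
        have hit : μ i ≤ t := hμ ⟨L, hL⟩ i (by exact Nat.le_of_not_lt hi.2)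
        exact mul_nonpos_of_nonpos_of_nonneg (by linarith) (hd0 i)
      linarith
    linarith

lemma proj_diag {n : Type*} [Fintype n] [DecidableEq n] (P : Matrix n n ℂ)
    (hH : Pᴴ = P) (hI : P * P = P) (i : n) :
    ∃ r : ℝ, 0 ≤ r ∧ P i i = (r : ℂ) := by
  have h1 : P i i = ∑ k, P i k * star (P i k) := by
    conv_lhs => rw [← hI]
    rw [Matrix.mul_apply]
    refine Finset.sum_congr rfl fun k _ => ?_
    congr 1
    have := congrFun (congrFun hH k) i
    rw [conjTranspose_apply] at this
    rw [← this]
  refine ⟨∑ k, Complex.normSq (P i k),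
    Finset.sum_nonneg fun k _ => Complex.normSq_nonneg _, ?_⟩
  rw [h1, Complex.ofReal_sum]
  refine Finset.sum_congr rfl fun k _ => ?_
  rw [Complex.star_def, Complex.mul_conj]

lemma V0_conj (M L : ℕ) (hLM : L ≤ M) (w : Fin M → ℂ) :
    (Matrix.of fun (i : Fin M) (j : Fin L) => if (i : ℕ) = (j : ℕ) then (1:ℂ) else 0)ᴴ *
      Matrix.diagonal w *
      Matrix.of (fun (i : Fin M) (j : Fin L) => if (i : ℕ) = (j : ℕ) then (1:ℂ) else 0) =
    Matrix.diagonal (fun j : Fin L => w (Fin.castLE hLM j)) := by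
  ext j k
  rw [Matrix.mul_assoc, Matrix.mul_apply]
  have hterm : ∀ i : Fin M,
      (Matrix.of fun (i : Fin M) (j : Fin L) => if (i : ℕ) = (j : ℕ) then (1:ℂ) else 0)ᴴ j i *
        (Matrix.diagonal w *
          Matrix.of (fun (i : Fin M) (j : Fin L) => if (i : ℕ) = (j : ℕ) then (1:ℂ) else 0)) i k
      = (if (i : ℕ) = (j : ℕ) then 1 else 0) * (w i * if (i : ℕ) = (k : ℕ) then 1 else 0) := by
    intro i
    rw [Matrix.conjTranspose_apply, Matrix.diagonal_mul, Matrix.of_apply, Matrix.of_apply]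
    congr 1
    split <;> simp
  rw [Finset.sum_congr rfl fun i _ => hterm i]
  rw [Finset.sum_eq_single (Fin.castLE hLM j)]
  · simp only [Fin.coe_castLE, if_pos rfl, one_mul]
    rw [Matrix.diagonal_apply]
    by_cases h : j = k
    · subst h; simp
    · rw [if_neg h, if_neg (fun hh => h (Fin.ext hh)), mul_zero]; simp
  · intro i _ hi
    rw [if_neg, zero_mul]
    intro hij
    exact hi (Fin.ext (by simpa using hij))
  · intro h; exact absurd (Finset.mem_univ _) h

lemma ineq_part (M L : ℕ) (hLM : L ≤ M) (lam : Fin M → ℝ) (hpos : ∀ i, 0 < lam i)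
    (hdec : ∀ i j : Fin M, i ≤ j → lam j ≤ lam i) (ρ : ℝ) (hρ : 0 < ρ)
    (V : Matrix (Fin M) (Fin L) ℂ) (hV : Vᴴ * V = 1) :
    Matrix.trace ((Vᴴ * Matrix.diagonal (fun i => ((lam i + 1 / ρ : ℝ) : ℂ)) * V)⁻¹ *
        (Vᴴ * Matrix.diagonal (fun i => ((lam i ^ 2 : ℝ) : ℂ)) * V)) ≤
      ((∑ l ∈ Finset.univ.filter (fun i : Fin M => (i : ℕ) < L),
          lam l ^ 2 / (lam l + 1 / ρ) : ℝ) : ℂ) := by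
  have hinv : (0 : ℝ) < 1 / ρ := by positivity
  set a : Fin M → ℝ := fun i => lam i + 1 / ρ with ha_def
  have ha : ∀ i, 0 < a i := fun i => add_pos (hpos i) hinv
  set μr : Fin M → ℝ := fun i => lam i ^ 2 / (lam i + 1 / ρ) with hμr_def
  have hμa : ∀ i, μr i * a i = lam i ^ 2 := fun i => by
    rw [hμr_def, ha_def]; exact div_mul_cancel₀ _ (ha i).ne'
  have hμ0 : ∀ i, 0 ≤ μr i := fun i => div_nonneg (sq_nonneg _) (ha i).le
  have hμdec : ∀ i j : Fin M, i ≤ j → μr j ≤ μr i := by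
    intro i j hij
    rw [hμr_def]
    rw [div_le_div_iff₀ (ha j) (ha i)]
    have h1 := hdec i j hij
    have h2 := hpos j
    have h3 := hpos i
    simp only [ha_def]
    nlinarith [mul_nonneg (mul_nonneg h3.le h2.le) (sub_nonneg.2 h1),
      mul_nonneg hinv.le (mul_nonneg (sub_nonneg.2 h1) (add_pos h3 h2).le)]
  set s : Fin M → ℝ := fun i => Real.sqrt (a i) with hs_def
  have hss : ∀ i, s i * s i = a i := fun i => Real.mul_self_sqrt (ha i).le
  set S : Matrix (Fin M) (Fin M) ℂ := Matrix.diagonal (fun i => (s i : ℂ)) with hS_def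
  have hSH : Sᴴ = S := by
    rw [hS_def, Matrix.diagonal_conjTranspose]
    refine congrArg Matrix.diagonal (funext fun i => ?_)
    simp [Complex.star_def, Complex.conj_ofReal]
  have hSS : S * S = Matrix.diagonal (fun i => (a i : ℂ)) := by
    rw [hS_def, Matrix.diagonal_mul_diagonal]
    refine congrArg Matrix.diagonal (funext fun i => ?_)
    exact_mod_cast hss i
  set C : Matrix (Fin M) (Fin M) ℂ := Matrix.diagonal (fun i => (μr i : ℂ)) with hC_def
  have hSCS : S * (C * S) = Matrix.diagonal (fun i => ((lam i ^ 2 : ℝ) : ℂ)) := by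
    rw [hS_def, hC_def, Matrix.diagonal_mul_diagonal, Matrix.diagonal_mul_diagonal]
    refine congrArg Matrix.diagonal (funext fun i => ?_)
    have hval : s i * (μr i * s i) = lam i ^ 2 := by
      rw [show s i * (μr i * s i) = μr i * (s i * s i) by ring, hss i, hμa i]
    exact_mod_cast hval
  set W : Matrix (Fin M) (Fin L) ℂ := S * V with hW_def
  have hWH : Wᴴ = Vᴴ * S := by rw [hW_def, Matrix.conjTranspose_mul, hSH]
  set G : Matrix (Fin L) (Fin L) ℂ := Wᴴ * W with hG_def
  have hGA : G = Vᴴ * Matrix.diagonal (fun i => (a i : ℂ)) * V := by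
    rw [hG_def, hWH, hW_def, ← hSS]; simp only [Matrix.mul_assoc]
  have hGC : Wᴴ * (C * W) = Vᴴ * Matrix.diagonal (fun i => ((lam i ^ 2 : ℝ) : ℂ)) * V := by
    rw [hWH, hW_def, ← hSCS]; simp only [Matrix.mul_assoc]
  have hApd : (Matrix.diagonal (fun i : Fin M => ((a i : ℝ) : ℂ))).PosDef :=
    Matrix.PosDef.diagonal (fun i => by exact_mod_cast ha i)
  have hGpd : G.PosDef := by
    rw [hGA]
    refine Matrix.PosDef.of_dotProduct_mulVec_pos ?_ ?_
    · exact Matrix.isHermitian_conjTranspose_mul_mul V hApd.isHermitian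
    · intro x hx
      have hVx : V *ᵥ x ≠ 0 := by
        intro h
        apply hx
        have h2 := congrArg (fun y => Vᴴ *ᵥ y) h
        simpa [Matrix.mulVec_mulVec, hV] using h2
      simpa only [Matrix.star_mulVec, Matrix.dotProduct_mulVec, Matrix.vecMul_vecMul]
        using hApd.dotProduct_mulVec_pos hVx
  have hGdet : IsUnit G.det := (Matrix.isUnit_iff_isUnit_det G).mp hGpd.isUnit
  have hGinv1 : G * G⁻¹ = 1 := Matrix.mul_nonsing_inv G hGdet
  have hGinv2 : G⁻¹ * G = 1 := Matrix.nonsing_inv_mul G hGdet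
  have hGiH : (G⁻¹)ᴴ = G⁻¹ := by
    rw [Matrix.conjTranspose_nonsing_inv, hGpd.isHermitian.eq]
  set P : Matrix (Fin M) (Fin M) ℂ := W * G⁻¹ * Wᴴ with hP_def
  have hPH : Pᴴ = P := by
    rw [hP_def]
    simp only [Matrix.conjTranspose_mul, Matrix.conjTranspose_conjTranspose, hGiH,
      Matrix.mul_assoc]
  have hPP : P * P = P := by
    rw [hP_def]
    calc W * G⁻¹ * Wᴴ * (W * G⁻¹ * Wᴴ)
        = W * (G⁻¹ * (Wᴴ * W) * (G⁻¹ * Wᴴ)) := by simp only [Matrix.mul_assoc]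
      _ = W * G⁻¹ * Wᴴ := by rw [← hG_def, hGinv2]; simp only [Matrix.one_mul, Matrix.mul_assoc]
  have hPtr : Matrix.trace P = (L : ℂ) := by
    rw [hP_def, Matrix.trace_mul_comm, ← Matrix.mul_assoc, ← hG_def, hGinv1, Matrix.trace_one]
    simp
  have hPd : ∀ i, ∃ r : ℝ, 0 ≤ r ∧ P i i = (r : ℂ) := proj_diag P hPH hPP
  choose d hd0 hdP using hPd
  have hQH : (1 - P)ᴴ = 1 - P := by rw [Matrix.conjTranspose_sub, Matrix.conjTranspose_one, hPH]
  have hQP : (1 - P) * (1 - P) = 1 - P := by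
    rw [Matrix.mul_sub, Matrix.mul_one, Matrix.sub_mul, Matrix.one_mul, hPP]
    abel
  have hd1 : ∀ i, d i ≤ 1 := by
    intro i
    obtain ⟨r, hr0, hr⟩ := proj_diag (1 - P) hQH hQP i
    have h1 : (1 : ℂ) - P i i = (r : ℂ) := by
      rw [← hr]; simp [Matrix.sub_apply, Matrix.one_apply_eq]
    rw [hdP i] at h1
    have h2 : (1 : ℝ) - d i = r := by exact_mod_cast h1
    linarith
  have hsum : ∑ i, d i = (L : ℝ) := by
    have h1 : ((∑ i, d i : ℝ) : ℂ) = (L : ℂ) := by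
      rw [← hPtr, Matrix.trace, Complex.ofReal_sum]
      exact Finset.sum_congr rfl fun i _ => (hdP i).symm
    exact_mod_cast h1
  have hmat : (Vᴴ * Matrix.diagonal (fun i => ((lam i + 1 / ρ : ℝ) : ℂ)) * V)⁻¹ *
      (Vᴴ * Matrix.diagonal (fun i => ((lam i ^ 2 : ℝ) : ℂ)) * V) = G⁻¹ * (Wᴴ * (C * W)) := by
    rw [hGC, hGA]
  rw [hmat]
  have htr : Matrix.trace (G⁻¹ * (Wᴴ * (C * W))) = ∑ i, (μr i : ℂ) * P i i := by
    rw [show G⁻¹ * (Wᴴ * (C * W)) = G⁻¹ * Wᴴ * (C * W) by simp only [Matrix.mul_assoc]]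
    rw [Matrix.trace_mul_comm]
    rw [show C * W * (G⁻¹ * Wᴴ) = C * P by rw [hP_def]; simp only [Matrix.mul_assoc]]
    rw [Matrix.trace]
    refine Finset.sum_congr rfl fun i _ => ?_
    show (C * P) i i = _
    rw [hC_def, Matrix.diagonal_mul]
  rw [htr]
  have heq : ∑ i, (μr i : ℂ) * P i i = ((∑ i, μr i * d i : ℝ) : ℂ) := by
    rw [Complex.ofReal_sum]
    refine Finset.sum_congr rfl fun i _ => ?_
    rw [hdP i, Complex.ofReal_mul]
  rw [heq]
  have hkey := key M L hLM μr d hμ0 hμdec hd0 hd1 hsum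
  have hrhs : (∑ l ∈ Finset.univ.filter (fun i : Fin M => (i : ℕ) < L),
      lam l ^ 2 / (lam l + 1 / ρ) : ℝ) = ∑ l ∈ Finset.univ.filter (fun i : Fin M => (i : ℕ) < L),
      μr l := by
    exact Finset.sum_congr rfl fun l _ => by rw [hμr_def]
  rw [hrhs]
  exact_mod_cast hkey

lemma eq_part (M L : ℕ) (hLM : L ≤ M) (lam : Fin M → ℝ) (hpos : ∀ i, 0 < lam i)
    (ρ : ℝ) (hρ : 0 < ρ) :
    Matrix.trace
      (((Matrix.of fun (i : Fin M) (j : Fin L) => if (i : ℕ) = (j : ℕ) then (1:ℂ) else 0)ᴴ *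
          Matrix.diagonal (fun i => ((lam i + 1 / ρ : ℝ) : ℂ)) *
          Matrix.of (fun (i : Fin M) (j : Fin L) => if (i : ℕ) = (j : ℕ) then (1:ℂ) else 0))⁻¹ *
        ((Matrix.of fun (i : Fin M) (j : Fin L) => if (i : ℕ) = (j : ℕ) then (1:ℂ) else 0)ᴴ *
          Matrix.diagonal (fun i => ((lam i ^ 2 : ℝ) : ℂ)) *
          Matrix.of (fun (i : Fin M) (j : Fin L) => if (i : ℕ) = (j : ℕ) then (1:ℂ) else 0))) =
      ((∑ l ∈ Finset.univ.filter (fun i : Fin M => (i : ℕ) < L),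
          lam l ^ 2 / (lam l + 1 / ρ) : ℝ) : ℂ) := by
  have hinv : (0 : ℝ) < 1 / ρ := by positivity
  have hne : ∀ j : Fin L, (lam (Fin.castLE hLM j) + 1 / ρ) ≠ 0 := fun j => by
    have := hpos (Fin.castLE hLM j); positivity
  have hinvd : (Matrix.diagonal (fun j : Fin L =>
      ((lam (Fin.castLE hLM j) + 1 / ρ : ℝ) : ℂ)))⁻¹ =
      Matrix.diagonal (fun j : Fin L => ((lam (Fin.castLE hLM j) + 1 / ρ : ℝ) : ℂ)⁻¹) := by
    apply Matrix.inv_eq_left_inv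
    rw [Matrix.diagonal_mul_diagonal, ← Matrix.diagonal_one]
    refine congrArg Matrix.diagonal (funext fun j => ?_)
    exact inv_mul_cancel₀ (by exact_mod_cast hne j)
  rw [V0_conj M L hLM, V0_conj M L hLM, hinvd, Matrix.diagonal_mul_diagonal,
    Matrix.trace_diagonal]
  rw [filter_lt_eq_map M L hLM, Finset.sum_map, Complex.ofReal_sum]
  refine Finset.sum_congr rfl fun j _ => ?_
  rw [Fin.castLEEmb_apply]
  push_cast
  rw [mul_comm, ← div_eq_mul_inv]

theorem stmt5 (M L : ℕ) (hLM : L ≤ M) (lam : Fin M → ℝ) (hpos : ∀ i, 0 < lam i)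
    (hdec : ∀ i j : Fin M, i ≤ j → lam j ≤ lam i) (ρ : ℝ) (hρ : 0 < ρ)
    (Λ : Matrix (Fin M) (Fin M) ℂ) (hΛ : Λ = Matrix.diagonal fun i => (lam i : ℂ))
    (V₀ : Matrix (Fin M) (Fin L) ℂ)
    (hV₀ : V₀ = Matrix.of fun (i : Fin M) (j : Fin L) => if (i : ℕ) = (j : ℕ) then 1 else 0) :
    (∀ V : Matrix (Fin M) (Fin L) ℂ, Vᴴ * V = 1 →
      Matrix.trace ((Vᴴ * (Λ + (ρ : ℂ)⁻¹ • (1 : Matrix (Fin M) (Fin M) ℂ)) * V)⁻¹ *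
          (Vᴴ * (Λ * Λ) * V)) ≤
        ((∑ l ∈ Finset.univ.filter (fun i : Fin M => (i : ℕ) < L),
            lam l ^ 2 / (lam l + 1 / ρ) : ℝ) : ℂ)) ∧
    Matrix.trace ((V₀ᴴ * (Λ + (ρ : ℂ)⁻¹ • (1 : Matrix (Fin M) (Fin M) ℂ)) * V₀)⁻¹ *
        (V₀ᴴ * (Λ * Λ) * V₀)) =
      ((∑ l ∈ Finset.univ.filter (fun i : Fin M => (i : ℕ) < L),
          lam l ^ 2 / (lam l + 1 / ρ) : ℝ) : ℂ) := by
  have hAd : Λ + (ρ : ℂ)⁻¹ • (1 : Matrix (Fin M) (Fin M) ℂ) =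
      Matrix.diagonal (fun i => ((lam i + 1 / ρ : ℝ) : ℂ)) := by
    rw [hΛ]
    ext i j
    by_cases h : i = j
    · subst h
      simp only [Matrix.add_apply, Matrix.smul_apply, Matrix.diagonal_apply_eq,
        Matrix.one_apply_eq, smul_eq_mul, mul_one]
      push_cast
      ring
    · simp only [Matrix.add_apply, Matrix.smul_apply, Matrix.diagonal_apply_ne _ h,
        Matrix.one_apply_ne h, smul_eq_mul, mul_zero, add_zero]
  have hΛ2 : Λ * Λ = Matrix.diagonal (fun i => ((lam i ^ 2 : ℝ) : ℂ)) := by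
    rw [hΛ, Matrix.diagonal_mul_diagonal]
    refine congrArg Matrix.diagonal (funext fun i => ?_)
    push_cast
    ring
  constructor
  · intro V hV
    rw [hAd, hΛ2]
    exact ineq_part M L hLM lam hpos hdec ρ hρ V hV
  · rw [hAd, hΛ2, hV₀]
    exact eq_part M L hLM lam hpos ρ hρ
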